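/- For any positive integer n and prime p, and any integer b ≥ 1 and positive integer ν coprime to p, the sum over k from 1 to p^b·ν of f(gcd(k,ν)) restricted to k coprime to p equals φ(p^b) · Σ_{k=1}^{ν} f(gcd(k,ν)), for any arithmetic function f. -/

import Mathlib

open Finset

lemma sum_zmod_val {n : ℕ} [NeZero n] (h : ℕ → ℂ) :
    ∑ x : ZMod n, h x.val = ∑ k ∈ range n, h k := by
  apply Finset.sum_nbij' (i := fun x => ZMod.val x) (j := fun k => (k : ZMod n))
  · intro a _; exact Finset.mem_range.mpr a.val_lt
  · intro a _; exact Finset.mem_univ _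
  · intro a _; exact ZMod.natCast_zmod_val a
  · intro a ha; exact ZMod.val_natCast_of_lt (Finset.mem_range.mp ha)
  · intro a _; rfl

lemma icc_sum_eq_range_sum {n : ℕ} (hn : 0 < n) (g : ℕ → ℂ) (h0 : g n = g 0) :
    ∑ k ∈ Finset.Icc 1 n, g k = ∑ k ∈ Finset.range n, g k := by
  have h1 : Finset.Icc 1 n = insert n (Finset.Ico 1 n) :=
    (Finset.Ico_insert_right (by omega)).symm
  have h2 : Finset.range n = insert 0 (Finset.Ico 1 n) := by
    ext x; simp [Finset.mem_range, Finset.mem_Ico]; omega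
  rw [h1, h2, Finset.sum_insert (by simp), Finset.sum_insert (by simp), h0]

theorem coprime_filter_sum (f : ℕ → ℂ) (p : ℕ) (hp : p.Prime)
    (b : ℕ) (hb : 1 ≤ b) (ν : ℕ) (hν : 0 < ν) (hcop : Nat.Coprime ν p) :
    (∑ k ∈ (Finset.Icc 1 (p ^ b * ν)).filter (fun k => Nat.Coprime k p),
        f (Nat.gcd k ν)) =
      (Nat.totient (p ^ b) : ℂ) * ∑ k ∈ Finset.Icc 1 ν, f (Nat.gcd k ν) := by
  set N := p ^ b * ν with hN
  have hpb : 0 < p ^ b := pow_pos hp.pos b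
  have hN0 : 0 < N := Nat.mul_pos hpb hν
  haveI : NeZero N := ⟨hN0.ne'⟩
  haveI : NeZero (p ^ b) := ⟨hpb.ne'⟩
  haveI : NeZero ν := ⟨hν.ne'⟩
  have hpdvd : p ∣ p ^ b := dvd_pow_self p (by omega)
  set c : ℕ → ℂ := fun k => if Nat.Coprime k p then 1 else 0 with hc
  set d : ℕ → ℂ := fun k => f (Nat.gcd k ν) with hd
  set g : ℕ → ℂ := fun k => c (k % p ^ b) * d (k % ν) with hg
  have hcop1 : ∀ k m, p ∣ m → (Nat.Coprime (k % m) p ↔ Nat.Coprime k p) := by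
    intro k m hm
    have := Nat.ModEq.gcd_eq ((Nat.mod_modEq k m).of_dvd hm)
    unfold Nat.Coprime; omega
  have hgcd1 : ∀ k, Nat.gcd (k % ν) ν = Nat.gcd k ν := by
    intro k
    conv_rhs => rw [Nat.gcd_comm, Nat.gcd_rec]
  -- g agrees with the summand
  have hgk : ∀ k, g k = if Nat.Coprime k p then f (Nat.gcd k ν) else 0 := by
    intro k
    simp only [hg, hc, hd, hgcd1, hcop1 k _ hpdvd]
    by_cases h : Nat.Coprime k p <;> simp [h]
  have hnotN : ¬ Nat.Coprime N p := fun h =>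
    hp.coprime_iff_not_dvd.mp h.symm (hpdvd.mul_right ν)
  -- CRT
  have hcopmn : Nat.Coprime (p ^ b) ν := (Nat.Coprime.pow_left b hcop.symm)
  set e := ZMod.chineseRemainder hcopmn with he
  have hcast : ∀ y : ZMod N, e y = (ZMod.cast y : ZMod (p ^ b) × ZMod ν) := fun y => rfl
  have hfst : ∀ ij : ZMod (p ^ b) × ZMod ν, (e.symm ij).val % p ^ b = ij.1.val := by
    intro ij
    have h1 : e (e.symm ij) = ij := e.apply_symm_apply ij
    have h2 : (e (e.symm ij)).1 = ((e.symm ij).val : ZMod (p ^ b)) := by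
      rw [hcast, Prod.fst_zmod_cast, ZMod.natCast_val]
    rw [h1] at h2
    rw [← ZMod.val_natCast, ← h2]
  have hsnd : ∀ ij : ZMod (p ^ b) × ZMod ν, (e.symm ij).val % ν = ij.2.val := by
    intro ij
    have h1 : e (e.symm ij) = ij := e.apply_symm_apply ij
    have h2 : (e (e.symm ij)).2 = ((e.symm ij).val : ZMod ν) := by
      rw [hcast, Prod.snd_zmod_cast, ZMod.natCast_val]
    rw [h1] at h2
    rw [← ZMod.val_natCast, ← h2]
  calc (∑ k ∈ (Finset.Icc 1 N).filter (fun k => Nat.Coprime k p), f (Nat.gcd k ν))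
      = ∑ k ∈ Finset.Icc 1 N, g k := by
        rw [Finset.sum_filter]
        exact Finset.sum_congr rfl fun k _ => (hgk k).symm
    _ = ∑ k ∈ Finset.range N, g k := by
        refine icc_sum_eq_range_sum hN0 g ?_
        rw [hgk, hgk]
        simp [hnotN, Nat.coprime_zero_left, hp.one_lt.ne']
    _ = ∑ x : ZMod N, g x.val := (sum_zmod_val g).symm
    _ = ∑ ij : ZMod (p ^ b) × ZMod ν, g (e.symm ij).val := by
        exact (Equiv.sum_comp e.toEquiv.symm (fun x : ZMod N => g x.val)).symm
    _ = ∑ ij : ZMod (p ^ b) × ZMod ν, c ij.1.val * d ij.2.val := by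
        refine Fintype.sum_congr _ _ fun ij => ?_
        rw [hg]; dsimp only; rw [hfst, hsnd]
    _ = (∑ i : ZMod (p ^ b), c i.val) * (∑ j : ZMod ν, d j.val) := by
        rw [Fintype.sum_prod_type]
        simp_rw [← Finset.mul_sum]
        rw [← Finset.sum_mul]
    _ = (Nat.totient (p ^ b) : ℂ) * ∑ k ∈ Finset.Icc 1 ν, f (Nat.gcd k ν) := by
        congr 1
        · rw [sum_zmod_val c, hc]
          rw [Finset.sum_boole]
          norm_cast
          rw [Nat.totient]
          congr 1
          apply Finset.filter_congr
          intro k _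
          simp only [Nat.Coprime, decide_eq_true_eq]
          constructor
          · exact fun h => Nat.Coprime.pow_left b (Nat.coprime_comm.mp h)
          · exact fun h =>
              Nat.coprime_comm.mp ((Nat.coprime_pow_left_iff (by omega : 0 < b) _ _).mp h)
        · rw [sum_zmod_val d]
          refine (icc_sum_eq_range_sum hν d ?_).symm
          rw [hd]; simp
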